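/- [Lemma 2: maximal conflict of interest everywhere] Assume there are no redundant actions for the decision-maker and no redundant actions for the experts, and that ū is concave on Δ(Ω) (i.e., ū(t·π + (1−t)·π') ≥ t·ū(π) + (1−t)·ū(π') for all π, π' ∈ Δ(Ω) and t ∈ [0,1]). Then for every π ∈ Δ(Ω), the set BR(π) equals the set of minimizers of α ↦ u(α,π) over Δ(Â): α ∈ BR(π) if and only if α ∈ Δ(Â) and u(α,π) ≤ u(α',π) for all α' ∈ Δ(Â). -/

import Mathlib

open Finset

variable {Ω A : Type*}

/-- Expected payoff of mixed action `α` at belief `π` (bilinear extension of `u`). -/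
noncomputable def pay [Fintype Ω] [Fintype A] (u : A → Ω → ℝ) (α : A → ℝ) (π : Ω → ℝ) : ℝ :=
  ∑ a, ∑ ω, α a * π ω * u a ω

/-- Expected payoff of pure action `a` at belief `π`. -/
noncomputable def payP [Fintype Ω] (u : A → Ω → ℝ) (a : A) (π : Ω → ℝ) : ℝ :=
  ∑ ω, π ω * u a ω

/-- Pure best replies of the decision-maker at belief `π`. -/
def br [Fintype Ω] (v : A → Ω → ℝ) (π : Ω → ℝ) : Set A :=
  {a | ∀ a', payP v a' π ≤ payP v a π}

/-- Mixed best replies of the decision-maker at belief `π`. -/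
def BR [Fintype Ω] [Fintype A] (v : A → Ω → ℝ) (π : Ω → ℝ) : Set (A → ℝ) :=
  {α ∈ stdSimplex ℝ A | ∀ α' ∈ stdSimplex ℝ A, pay v α' π ≤ pay v α π}

/-- The expert value function `ū(π) = max_{α ∈ BR(π)} u(α, π)`. -/
noncomputable def ubar [Fintype Ω] [Fintype A] (u v : A → Ω → ℝ) (π : Ω → ℝ) : ℝ :=
  sSup ((fun α => pay u α π) '' BR v π)

/-- The decision-maker value function `v̄(π) = max_a v(a, π)`. -/
noncomputable def vbar [Fintype Ω] [Fintype A] (v : A → Ω → ℝ) (π : Ω → ℝ) : ℝ :=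
  ⨆ a, payP v a π

/-- Actions that are a best reply to some belief. -/
def Ahat [Fintype Ω] [Fintype A] (v : A → Ω → ℝ) : Set A :=
  {a | ∃ π ∈ stdSimplex ℝ Ω, a ∈ br v π}

/-- Mixed actions supported on `B`. -/
def simplexOn [Fintype A] (B : Set A) : Set (A → ℝ) :=
  {α | α ∈ stdSimplex ℝ A ∧ ∀ a ∉ B, α a = 0}

/-- `(lam, p)` is a splitting of the prior. -/
def IsSplitting [Fintype Ω] {S : Type*} [Fintype S] (lam : S → ℝ) (p : S → Ω → ℝ)
    (prior : Ω → ℝ) : Prop :=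
  (∀ s, 0 < lam s) ∧ (∑ s, lam s) = 1 ∧ (∀ s, p s ∈ stdSimplex ℝ Ω) ∧
    ∀ ω, (∑ s, lam s * p s ω) = prior ω

/-- `(lam, p)` is an optimal splitting of the prior: it attains `cav ū (prior)`. -/
def IsOptimalSplitting [Fintype Ω] [Fintype A] (u v : A → Ω → ℝ) {S : Type*} [Fintype S]
    (lam : S → ℝ) (p : S → Ω → ℝ) (prior : Ω → ℝ) : Prop :=
  IsSplitting lam p prior ∧
    ∀ (T : Type) [Fintype T] [Nonempty T] (mu : T → ℝ) (q : T → Ω → ℝ),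
      IsSplitting mu q prior →
        (∑ t, mu t * ubar u v (q t)) ≤ ∑ s, lam s * ubar u v (p s)

/-- Beliefs at which `a` is optimal for the decision-maker. -/
def BRinv [Fintype Ω] [Fintype A] (v : A → Ω → ℝ) (a : A) : Set (Ω → ℝ) :=
  {π ∈ stdSimplex ℝ Ω | payP v a π = vbar v π}

/-- No redundant actions for the decision-maker. -/
def NoRedundantDM [Fintype Ω] [Fintype A] (v : A → Ω → ℝ) : Prop :=
  ∀ B : Set A, B.Nonempty → B ⊂ Ahat v →
    ∃ π ∈ stdSimplex ℝ Ω, ∀ a ∈ B, payP v a π < vbar v π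

/-- No redundant actions for the experts. -/
def NoRedundantExperts [Fintype Ω] (u : A → Ω → ℝ) : Prop :=
  ∀ a a' : A, a ≠ a' → ∃ ω, u a ω ≠ u a' ω

/-- The expert value function `ū` is concave on the simplex. -/
def UbarConcave [Fintype Ω] [Fintype A] (u v : A → Ω → ℝ) : Prop :=
  ∀ π ∈ stdSimplex ℝ Ω, ∀ π' ∈ stdSimplex ℝ Ω, ∀ t ∈ Set.Icc (0 : ℝ) 1,
    t * ubar u v π + (1 - t) * ubar u v π' ≤ ubar u v (fun ω => t * π ω + (1 - t) * π' ω)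

section Basics

open Classical in
/-- point mass -/
noncomputable def pmass (a : A) : A → ℝ := fun b => if b = a then 1 else 0

variable [Fintype Ω] [Fintype A]

theorem pmass_mem (a : A) : pmass a ∈ stdSimplex ℝ A := by
  classical
  constructor
  · intro x; unfold pmass; split <;> norm_num
  · simp [pmass]

theorem pay_eq_sum (u : A → Ω → ℝ) (α : A → ℝ) (π : Ω → ℝ) :
    pay u α π = ∑ a, α a * payP u a π := by
  unfold pay payP
  refine Finset.sum_congr rfl fun a _ => ?_
  rw [Finset.mul_sum]
  refine Finset.sum_congr rfl fun ω _ => by ring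

theorem pay_pmass (u : A → Ω → ℝ) (a : A) (π : Ω → ℝ) :
    pay u (pmass a) π = payP u a π := by
  classical
  rw [pay_eq_sum, Finset.sum_eq_single a]
  · simp [pmass]
  · intro b _ hb; simp [pmass, hb]
  · intro h; exact absurd (Finset.mem_univ a) h

theorem payP_comb (u : A → Ω → ℝ) (a : A) (s t : ℝ) (π π' : Ω → ℝ) :
    payP u a (fun ω => s * π ω + t * π' ω) = s * payP u a π + t * payP u a π' := by
  unfold payP
  rw [Finset.mul_sum, Finset.mul_sum, ← Finset.sum_add_distrib]
  refine Finset.sum_congr rfl fun ω _ => by ring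

omit [Fintype A] in
theorem comb_mem {π π' : Ω → ℝ} (hπ : π ∈ stdSimplex ℝ Ω) (hπ' : π' ∈ stdSimplex ℝ Ω)
    {t : ℝ} (h0 : 0 ≤ t) (h1 : t ≤ 1) :
    (fun ω => (1 - t) * π ω + t * π' ω) ∈ stdSimplex ℝ Ω := by
  constructor
  · intro ω
    show 0 ≤ (1 - t) * π ω + t * π' ω
    have h2 := hπ.1 ω; have h3 := hπ'.1 ω
    nlinarith
  · have : ∑ ω, ((1 - t) * π ω + t * π' ω) = (1-t) * (∑ ω, π ω) + t * (∑ ω, π' ω) := by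
      rw [Finset.mul_sum, Finset.mul_sum, ← Finset.sum_add_distrib]
    rw [this, hπ.2, hπ'.2]; ring

variable [Nonempty A]

theorem br_nonempty (v : A → Ω → ℝ) (π : Ω → ℝ) : ∃ b, b ∈ br v π := by
  obtain ⟨b, -, hb⟩ := Finset.exists_max_image Finset.univ (fun a => payP v a π)
    ⟨Classical.arbitrary A, Finset.mem_univ _⟩
  exact ⟨b, fun a' => hb a' (Finset.mem_univ _)⟩

theorem payP_le_vbar (v : A → Ω → ℝ) (a : A) (π : Ω → ℝ) : payP v a π ≤ vbar v π := by
  unfold vbar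
  have h : BddAbove (Set.range fun a => payP v a π) := Set.Finite.bddAbove (Set.finite_range _)
  exact le_ciSup h a

theorem vbar_eq_of_br {v : A → Ω → ℝ} {b : A} {π : Ω → ℝ} (hb : b ∈ br v π) :
    vbar v π = payP v b π :=
  le_antisymm (ciSup_le fun a => hb a) (payP_le_vbar v b π)

omit [Nonempty A] in
theorem br_subset_Ahat (v : A → Ω → ℝ) {π : Ω → ℝ} (hπ : π ∈ stdSimplex ℝ Ω) :
    br v π ⊆ Ahat v := fun a ha => ⟨π, hπ, ha⟩

/-- mixed best replies are exactly mixtures of pure best replies -/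
theorem mem_BR_iff {v : A → Ω → ℝ} {π : Ω → ℝ} {α : A → ℝ} :
    α ∈ BR v π ↔ α ∈ stdSimplex ℝ A ∧ ∀ a, α a ≠ 0 → a ∈ br v π := by
  classical
  obtain ⟨b₀, hb₀⟩ := br_nonempty v π
  constructor
  · rintro ⟨hα, hopt⟩
    refine ⟨hα, fun a ha => ?_⟩
    by_contra hbr
    have hlt : payP v a π < payP v b₀ π := by
      rcases lt_or_ge (payP v a π) (payP v b₀ π) with h | h
      · exact h
      · exact absurd (fun a' => le_trans (hb₀ a') h) hbr
    have hapos : 0 < α a := lt_of_le_of_ne (hα.1 a) (Ne.symm ha)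
    set α' : A → ℝ := fun c => if c = a then 0 else if c = b₀ then α b₀ + α a else α c with hα'def
    have hab : a ≠ b₀ := fun h => hbr (h ▸ hb₀)
    have key : ∀ c, α' c = α c + (if c = b₀ then α a else 0) - (if c = a then α a else 0) := by
      intro c
      simp only [hα'def]
      by_cases h1 : c = a
      · subst h1; simp [hab]
      · by_cases h2 : c = b₀
        · rw [h2]; simp [Ne.symm hab]
        · simp [h1, h2]
    have hα'_mem : α' ∈ stdSimplex ℝ A := by
      constructor
      · intro c
        rw [key c]
        by_cases h1 : c = a
        · subst h1; simp [hab]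
        · by_cases h2 : c = b₀
          · rw [h2]; simp [Ne.symm hab]
            have := hα.1 b₀; linarith [hapos.le]
          · simp only [if_neg h1, if_neg h2]; simpa using hα.1 c
      · simp only [key]
        rw [Finset.sum_sub_distrib, Finset.sum_add_distrib]
        simp [Finset.sum_ite_eq', hα.2]
    have hgain : pay v α π < pay v α' π := by
      rw [pay_eq_sum, pay_eq_sum]
      have h2 : ∀ c, α' c * payP v c π
          = α c * payP v c π + (if c = b₀ then α a * payP v b₀ π else 0)
            - (if c = a then α a * payP v a π else 0) := by
        intro c
        rw [key c]
        by_cases h1 : c = a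
        · subst h1; simp [hab]
        · by_cases h2 : c = b₀
          · rw [h2]; simp [Ne.symm hab]; ring
          · simp [h1, h2]
      simp only [h2]
      rw [Finset.sum_sub_distrib, Finset.sum_add_distrib]
      simp only [Finset.sum_ite_eq', Finset.mem_univ, if_true]
      nlinarith
    exact absurd (hopt α' hα'_mem) (not_le.mpr hgain)
  · rintro ⟨hα, hsupp⟩
    refine ⟨hα, fun α' hα' => ?_⟩
    have h1 : pay v α π = vbar v π := by
      rw [pay_eq_sum]
      have h0 : ∀ c, α c * payP v c π = α c * vbar v π := by
        intro c
        by_cases h : α c = 0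
        · simp [h]
        · rw [vbar_eq_of_br (hsupp c h)]
      simp only [h0]
      rw [← Finset.sum_mul, hα.2, one_mul]
    have h2 : pay v α' π ≤ vbar v π := by
      rw [pay_eq_sum]
      calc ∑ c, α' c * payP v c π ≤ ∑ c, α' c * vbar v π :=
            Finset.sum_le_sum fun c _ => mul_le_mul_of_nonneg_left (payP_le_vbar v c π) (hα'.1 c)
        _ = vbar v π := by rw [← Finset.sum_mul, hα'.2, one_mul]
    rw [h1]; exact h2

end Basics
section Ubar

variable [Fintype Ω] [Fintype A] [Nonempty A]

theorem bddAbove_BR_image (u v : A → Ω → ℝ) (π : Ω → ℝ) :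
    BddAbove ((fun α => pay u α π) '' BR v π) := by
  refine ⟨vbar u π, ?_⟩
  rintro x ⟨α, hα, rfl⟩
  have hs : α ∈ stdSimplex ℝ A := hα.1
  show pay u α π ≤ _
  rw [pay_eq_sum]
  calc ∑ c, α c * payP u c π ≤ ∑ c, α c * vbar u π :=
        Finset.sum_le_sum fun c _ => mul_le_mul_of_nonneg_left (payP_le_vbar u c π) (hs.1 c)
    _ = vbar u π := by rw [← Finset.sum_mul, hs.2, one_mul]

theorem pmass_mem_BR {v : A → Ω → ℝ} {π : Ω → ℝ} {b : A} (hb : b ∈ br v π) :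
    pmass b ∈ BR v π := by
  classical
  rw [mem_BR_iff]
  refine ⟨pmass_mem b, fun a ha => ?_⟩
  by_cases h : a = b
  · exact h ▸ hb
  · exact absurd (by simp [pmass, h]) ha

theorem payP_le_ubar (u : A → Ω → ℝ) {v : A → Ω → ℝ} {π : Ω → ℝ} {b : A} (hb : b ∈ br v π) :
    payP u b π ≤ ubar u v π := by
  have : payP u b π ∈ (fun α => pay u α π) '' BR v π :=
    ⟨pmass b, pmass_mem_BR hb, pay_pmass u b π⟩
  exact le_csSup (bddAbove_BR_image u v π) this

theorem ubar_le {u v : A → Ω → ℝ} {π : Ω → ℝ} {C : ℝ}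
    (h : ∀ b ∈ br v π, payP u b π ≤ C) : ubar u v π ≤ C := by
  obtain ⟨b₀, hb₀⟩ := br_nonempty v π
  refine csSup_le ⟨payP u b₀ π, pmass b₀, pmass_mem_BR hb₀, pay_pmass u b₀ π⟩ ?_
  rintro x ⟨α, hα, rfl⟩
  obtain ⟨hs, hsupp⟩ := mem_BR_iff.mp hα
  show pay u α π ≤ _
  rw [pay_eq_sum]
  calc ∑ c, α c * payP u c π ≤ ∑ c, α c * C := by
        refine Finset.sum_le_sum fun c _ => ?_
        by_cases hc : α c = 0
        · simp [hc]
        · exact mul_le_mul_of_nonneg_left (h c (hsupp c hc)) (hs.1 c)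
    _ = C := by rw [← Finset.sum_mul, hs.2, one_mul]

theorem exists_br_ubar (u v : A → Ω → ℝ) (π : Ω → ℝ) :
    ∃ b ∈ br v π, ubar u v π = payP u b π := by
  classical
  obtain ⟨b₀, hb₀⟩ := br_nonempty v π
  obtain ⟨b, hbmem, hbmax⟩ := Finset.exists_max_image
    (Finset.univ.filter (fun c => c ∈ br v π)) (fun c => payP u c π)
    ⟨b₀, by simp [hb₀]⟩
  have hbbr : b ∈ br v π := by simpa using hbmem
  refine ⟨b, hbbr, le_antisymm ?_ (payP_le_ubar u hbbr)⟩
  exact ubar_le fun c hc => hbmax c (by simp [hc])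

/-- The strict best-reply region of `a` relative to `Ahat`. -/
def Ua [Fintype Ω] [Fintype A] (v : A → Ω → ℝ) (a : A) : Set (Ω → ℝ) :=
  {ρ | ρ ∈ stdSimplex ℝ Ω ∧ ∀ b ∈ Ahat v, b ≠ a → payP v b ρ < payP v a ρ}

theorem br_eq_of_mem_Ua {v : A → Ω → ℝ} {a : A} {ρ : Ω → ℝ} (hρ : ρ ∈ Ua v a) :
    br v ρ = {a} := by
  obtain ⟨c, hc⟩ := br_nonempty v ρ
  have hca : c = a := by
    by_contra hne
    exact absurd (hc a) (not_le.mpr (hρ.2 c (br_subset_Ahat v hρ.1 hc) hne))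
  subst hca
  ext b
  simp only [Set.mem_singleton_iff]
  constructor
  · intro hb
    by_contra hne
    exact absurd (hb c) (not_le.mpr (hρ.2 b (br_subset_Ahat v hρ.1 hb) hne))
  · rintro rfl; exact hc

theorem ubar_eq_of_mem_Ua (u : A → Ω → ℝ) {v : A → Ω → ℝ} {a : A} {ρ : Ω → ℝ}
    (hρ : ρ ∈ Ua v a) : ubar u v ρ = payP u a ρ := by
  obtain ⟨b, hb, heq⟩ := exists_br_ubar u v ρ
  have : b = a := by
    have := br_eq_of_mem_Ua hρ ▸ hb
    simpa using this
  rw [heq, this]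

theorem mem_Ua_of_br {v : A → Ω → ℝ} {a : A} {ρ : Ω → ℝ} (hρ : ρ ∈ stdSimplex ℝ Ω)
    (ha : a ∈ br v ρ) (h : ∀ b ∈ Ahat v, b ≠ a → payP v b ρ < vbar v ρ) : ρ ∈ Ua v a :=
  ⟨hρ, fun b hb hne => lt_of_lt_of_le (h b hb hne) (vbar_eq_of_br ha ▸ le_refl _)⟩

/-- Existence of a belief where `a ∈ Ahat` is the strictly unique best reply among `Ahat`. -/
theorem exists_mem_Ua {v : A → Ω → ℝ} (hnrDM : NoRedundantDM v) {a : A} (ha : a ∈ Ahat v)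
    (hπ0 : ∃ π₀, π₀ ∈ stdSimplex ℝ Ω) : ∃ ρ, ρ ∈ Ua v a := by
  by_cases hsing : ∀ b ∈ Ahat v, b = a
  · obtain ⟨π₀, h₀⟩ := hπ0
    exact ⟨π₀, h₀, fun b hb hne => absurd (hsing b hb) hne⟩
  · push_neg at hsing
    set B : Set A := Ahat v \ {a} with hB
    have hBne : B.Nonempty := by
      obtain ⟨b, hb, hne⟩ := hsing
      exact ⟨b, hb, hne⟩
    have hBsub : B ⊂ Ahat v := by
      constructor
      · exact Set.diff_subset
      · intro hsub
        exact ((hsub ha).2 rfl)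
    obtain ⟨ρ, hρ, hlt⟩ := hnrDM B hBne hBsub
    obtain ⟨c, hc⟩ := br_nonempty v ρ
    have hcA : c ∈ Ahat v := br_subset_Ahat v hρ hc
    have hca : c = a := by
      by_contra hne
      exact absurd (vbar_eq_of_br hc).symm (ne_of_lt (hlt c ⟨hcA, hne⟩))
    subst hca
    exact ⟨ρ, hρ, fun b hb hne =>
      lt_of_lt_of_le (hlt b ⟨hb, hne⟩) (le_of_eq (vbar_eq_of_br hc))⟩

end Ubar
section Claim

/-- Selection of an interpolation parameter close to 1 keeping finitely many
affine functions negative. -/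
theorem exists_t_near_one {ι : Type*} (S : Finset ι) (f g : ι → ℝ) (hg : ∀ i ∈ S, g i < 0) :
    ∃ t : ℝ, 0 < t ∧ t < 1 ∧ ∀ i ∈ S, (1 - t) * f i + t * g i < 0 := by
  rcases S.eq_empty_or_nonempty with hS | hS
  · exact ⟨1/2, by norm_num, by norm_num, fun i hi => by simp [hS] at hi⟩
  · set m : ℝ := S.inf' hS (fun i => -(g i)) with hm
    set K : ℝ := S.sup' hS (fun i => |f i - g i|) with hK
    have hmpos : 0 < m := by
      rw [hm, Finset.lt_inf'_iff]
      intro i hi; linarith [hg i hi]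
    have hKnn : 0 ≤ K := by
      obtain ⟨i, hi⟩ := hS
      rw [hK]; exact le_trans (abs_nonneg _) (Finset.le_sup' (fun j => |f j - g j|) hi)
    set δ : ℝ := min (1/2) (m / (2 * (K + 1))) with hδ
    have hδpos : 0 < δ := lt_min (by norm_num) (by positivity)
    have hδhalf : δ ≤ 1/2 := min_le_left _ _
    refine ⟨1 - δ, by linarith, by linarith, fun i hi => ?_⟩
    have h1 : (1 - (1 - δ)) * f i + (1 - δ) * g i = g i + δ * (f i - g i) := by ring
    have h2 : δ * (f i - g i) ≤ δ * |f i - g i| :=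
      mul_le_mul_of_nonneg_left (le_abs_self _) hδpos.le
    have h3 : |f i - g i| ≤ K := by rw [hK]; exact Finset.le_sup' (fun j => |f j - g j|) hi
    have h4 : m ≤ -(g i) := by rw [hm]; exact Finset.inf'_le _ hi
    have h5 : δ * K ≤ m / 2 := by
      have : δ ≤ m / (2 * (K + 1)) := min_le_right _ _
      have h6 : δ * K ≤ (m / (2 * (K + 1))) * K :=
        mul_le_mul_of_nonneg_right this hKnn
      have h7 : (m / (2 * (K + 1))) * K ≤ m / 2 := by
        rw [div_mul_eq_mul_div, div_le_div_iff₀ (by positivity) (by norm_num)]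
        nlinarith
      linarith
    have h8 : δ * (f i - g i) ≤ m / 2 := by
      calc δ * (f i - g i) ≤ δ * |f i - g i| := h2
        _ ≤ δ * K := mul_le_mul_of_nonneg_left h3 hδpos.le
        _ ≤ m / 2 := h5
    rw [h1]; linarith

/-- Selection of an interval near 0 keeping finitely many affine functions negative. -/
theorem exists_eps_near_zero {ι : Type*} (S : Finset ι) (f g : ι → ℝ) (hf : ∀ i ∈ S, f i < 0) :
    ∃ ε : ℝ, 0 < ε ∧ ε ≤ 1 ∧ ∀ t : ℝ, 0 < t → t < ε → ∀ i ∈ S, (1 - t) * f i + t * g i < 0 := by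
  rcases S.eq_empty_or_nonempty with hS | hS
  · exact ⟨1, by norm_num, le_refl _, fun t _ _ i hi => by simp [hS] at hi⟩
  · set m : ℝ := S.inf' hS (fun i => -(f i)) with hm
    set K : ℝ := S.sup' hS (fun i => |g i - f i|) with hK
    have hmpos : 0 < m := by
      rw [hm, Finset.lt_inf'_iff]
      intro i hi; linarith [hf i hi]
    have hKnn : 0 ≤ K := by
      obtain ⟨i, hi⟩ := hS
      rw [hK]; exact le_trans (abs_nonneg _) (Finset.le_sup' (fun j => |g j - f j|) hi)
    refine ⟨min 1 (m / (2 * (K + 1))), lt_min (by norm_num) (by positivity), min_le_left _ _,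
      fun t ht0 htε i hi => ?_⟩
    have h1 : (1 - t) * f i + t * g i = f i + t * (g i - f i) := by ring
    have h3 : |g i - f i| ≤ K := by rw [hK]; exact Finset.le_sup' (fun j => |g j - f j|) hi
    have h4 : m ≤ -(f i) := by rw [hm]; exact Finset.inf'_le _ hi
    have htm : t < m / (2 * (K + 1)) := lt_of_lt_of_le htε (min_le_right _ _)
    have h5 : t * (g i - f i) ≤ t * K := by
      calc t * (g i - f i) ≤ t * |g i - f i| :=
            mul_le_mul_of_nonneg_left (le_abs_self _) ht0.le
        _ ≤ t * K := mul_le_mul_of_nonneg_left h3 ht0.le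
    have h6 : t * K < m := by
      have h7 : t * K ≤ t * (K + 1) := by nlinarith
      have h8 : t * (K + 1) < (m / (2 * (K + 1))) * (K + 1) :=
        mul_lt_mul_of_pos_right htm (by positivity)
      have h9 : (m / (2 * (K + 1))) * (K + 1) = m / 2 := by
        field_simp
      linarith
    rw [h1]; linarith

variable [Fintype Ω] [Fintype A] [Nonempty A]

/-- Key claim: `ū(π) ≤ u(a, π)` for every `a ∈ Ahat` and every belief `π`. -/
theorem ubar_le_payP {u v : A → Ω → ℝ} (hnrDM : NoRedundantDM v) (hconc : UbarConcave u v)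
    {π : Ω → ℝ} (hπ : π ∈ stdSimplex ℝ Ω) {a : A} (ha : a ∈ Ahat v) :
    ubar u v π ≤ payP u a π := by
  classical
  obtain ⟨ρ, hρ⟩ := exists_mem_Ua hnrDM ha ⟨π, hπ⟩
  set S : Finset A := Finset.univ.filter (fun b => b ∈ Ahat v ∧ b ≠ a) with hS
  obtain ⟨t1, ht0, ht1, hneg⟩ := exists_t_near_one S
    (fun b => payP v b π - payP v a π) (fun b => payP v b ρ - payP v a ρ)
    (fun b hb => by
      obtain ⟨hbA, hbne⟩ : b ∈ Ahat v ∧ b ≠ a := by simpa [hS] using hb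
      show payP v b ρ - payP v a ρ < 0
      linarith [hρ.2 b hbA hbne])
  set σ : Ω → ℝ := fun ω => (1 - t1) * π ω + t1 * ρ ω with hσ
  have hσΔ : σ ∈ stdSimplex ℝ Ω := comb_mem hπ hρ.1 ht0.le ht1.le
  have hσUa : σ ∈ Ua v a := by
    refine ⟨hσΔ, fun b hbA hbne => ?_⟩
    have h1 : payP v b σ = (1 - t1) * payP v b π + t1 * payP v b ρ := payP_comb v b _ _ π ρ
    have h2 : payP v a σ = (1 - t1) * payP v a π + t1 * payP v a ρ := payP_comb v a _ _ π ρ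
    have := hneg b (by simp [hS, hbA, hbne])
    rw [h1, h2]; linarith
  have hubσ : ubar u v σ = payP u a σ := ubar_eq_of_mem_Ua u hσUa
  have hubρ : ubar u v ρ = payP u a ρ := ubar_eq_of_mem_Ua u hρ
  have hcv := hconc π hπ ρ hρ.1 (1 - t1) ⟨by linarith, by linarith⟩
  have hfun : (fun ω => (1 - t1) * π ω + (1 - (1 - t1)) * ρ ω) = σ := by
    funext ω; rw [hσ]; ring_nf
  rw [hfun] at hcv
  have hpσ : payP u a σ = (1 - t1) * payP u a π + t1 * payP u a ρ := payP_comb u a _ _ π ρ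
  have hrw : 1 - (1 - t1) = t1 := by ring
  rw [hrw, hubρ, hubσ, hpσ] at hcv
  have hfin : (1 - t1) * ubar u v π ≤ (1 - t1) * payP u a π := by linarith
  exact le_of_mul_le_mul_left hfin (by linarith)

end Claim
section Generic

open Polynomial

/-- Uniform variant: interpolating towards any uniformly bounded value keeps finitely many
negative quantities negative for small weights. -/
theorem exists_eps_uniform {ι : Type*} (S : Finset ι) (f : ι → ℝ) (G : ℝ) (hG : 0 ≤ G)
    (hf : ∀ i ∈ S, f i < 0) :
    ∃ ε : ℝ, 0 < ε ∧ ε ≤ 1 ∧ ∀ t : ℝ, 0 < t → t < ε → ∀ i ∈ S, ∀ y : ℝ, |y| ≤ G →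
      (1 - t) * f i + t * y < 0 := by
  rcases S.eq_empty_or_nonempty with hS | hS
  · exact ⟨1, by norm_num, le_refl _, fun t _ _ i hi => by simp [hS] at hi⟩
  · set m : ℝ := S.inf' hS (fun i => -(f i)) with hm
    set K : ℝ := S.sup' hS (fun i => |f i|) with hK
    have hmpos : 0 < m := by
      rw [hm, Finset.lt_inf'_iff]
      intro i hi; linarith [hf i hi]
    have hKnn : 0 ≤ K := by
      obtain ⟨i, hi⟩ := hS
      rw [hK]; exact le_trans (abs_nonneg _) (Finset.le_sup' (fun j => |f j|) hi)
    refine ⟨min 1 (m / (2 * (G + K + 1))), lt_min (by norm_num) (by positivity), min_le_left _ _,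
      fun t ht0 htε i hi y hy => ?_⟩
    have h1 : (1 - t) * f i + t * y = f i + t * (y - f i) := by ring
    have h3 : |f i| ≤ K := by rw [hK]; exact Finset.le_sup' (fun j => |f j|) hi
    have h4 : m ≤ -(f i) := by rw [hm]; exact Finset.inf'_le _ hi
    have htm : t < m / (2 * (G + K + 1)) := lt_of_lt_of_le htε (min_le_right _ _)
    have h5 : t * (y - f i) ≤ t * (G + K) := by
      have : y - f i ≤ |y| + |f i| := by
        have := abs_sub_abs_le_abs_sub y (f i)
        have h := le_abs_self (y - f i)
        have := abs_sub (y) (f i)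
        calc y - f i ≤ |y - f i| := le_abs_self _
          _ ≤ |y| + |f i| := abs_sub _ _
      have h2 : y - f i ≤ G + K := by linarith
      exact mul_le_mul_of_nonneg_left h2 ht0.le
    have h6 : t * (G + K) < m := by
      have h7 : t * (G + K) ≤ t * (G + K + 1) := by nlinarith
      have h8 : t * (G + K + 1) < (m / (2 * (G + K + 1))) * (G + K + 1) :=
        mul_lt_mul_of_pos_right htm (by positivity)
      have h9 : (m / (2 * (G + K + 1))) * (G + K + 1) = m / 2 := by
        field_simp
      linarith
    rw [h1]; linarith

variable [Fintype Ω] [Nonempty Ω] [Fintype A] [Nonempty A]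

theorem payP_abs_le (w : A → Ω → ℝ) (b : A) {q : Ω → ℝ} (hq : q ∈ stdSimplex ℝ Ω) :
    |payP w b q| ≤ Finset.univ.sup' Finset.univ_nonempty (fun ω => |w b ω|) := by
  set M := Finset.univ.sup' Finset.univ_nonempty (fun ω => |w b ω|) with hM
  have hMω : ∀ ω, |w b ω| ≤ M := fun ω => by
    rw [hM]; exact Finset.le_sup' (fun ω => |w b ω|) (Finset.mem_univ ω)
  unfold payP
  calc |∑ ω, q ω * w b ω| ≤ ∑ ω, |q ω * w b ω| := Finset.abs_sum_le_sum_abs _ _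
    _ ≤ ∑ ω, q ω * M := by
        refine Finset.sum_le_sum fun ω _ => ?_
        rw [abs_mul, abs_of_nonneg (hq.1 ω)]
        exact mul_le_mul_of_nonneg_left (hMω ω) (hq.1 ω)
    _ = M := by rw [← Finset.sum_mul, hq.2, one_mul]

/-- There is a belief in `Ua v a` at which the expert payoff of `a` is distinct
from that of every other action. -/
theorem exists_good_point {u v : A → Ω → ℝ} (hnrE : NoRedundantExperts u) {a : A}
    {ρ : Ω → ℝ} (hρ : ρ ∈ Ua v a) :
    ∃ π', π' ∈ Ua v a ∧ ∀ b : A, b ≠ a → payP u a π' ≠ payP u b π' := by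
  classical
  set S : Finset A := Finset.univ.filter (fun b => b ∈ Ahat v ∧ b ≠ a) with hS
  -- uniform bound on |payP v b q - payP v a q| over the simplex
  set M : A → ℝ := fun b => Finset.univ.sup' Finset.univ_nonempty (fun ω => |v b ω|) with hMdef
  set G : ℝ := (Finset.univ.sup' Finset.univ_nonempty M) * 2 with hG
  have hGbound : ∀ b : A, ∀ q ∈ stdSimplex ℝ Ω, |payP v b q - payP v a q| ≤ G := by
    intro b q hq
    have h1 : |payP v b q| ≤ M b := payP_abs_le v b hq
    have h2 : |payP v a q| ≤ M a := payP_abs_le v a hq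
    have h3 : M b ≤ Finset.univ.sup' Finset.univ_nonempty M :=
      Finset.le_sup' M (Finset.mem_univ b)
    have h4 : M a ≤ Finset.univ.sup' Finset.univ_nonempty M :=
      Finset.le_sup' M (Finset.mem_univ a)
    calc |payP v b q - payP v a q| ≤ |payP v b q| + |payP v a q| := abs_sub _ _
      _ ≤ G := by rw [hG]; linarith
  have hGnn : 0 ≤ G := le_trans (abs_nonneg _) (hGbound a ρ hρ.1)
  obtain ⟨ε, hε0, hε1, hεp⟩ := exists_eps_uniform S (fun b => payP v b ρ - payP v a ρ) G hGnn
    (fun b hb => by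
      obtain ⟨hbA, hbne⟩ : b ∈ Ahat v ∧ b ≠ a := by simpa [hS] using hb
      show payP v b ρ - payP v a ρ < 0
      linarith [hρ.2 b hbA hbne])
  set c : ℝ := ε / 2 with hc
  have hc0 : 0 < c := by positivity
  have hcε : c < ε := by linarith
  have hc1 : c ≤ 1 := by linarith
  -- any mixture (1-c)ρ + c q lies in Ua v a
  have hmix : ∀ q ∈ stdSimplex ℝ Ω, (fun ω => (1 - c) * ρ ω + c * q ω) ∈ Ua v a := by
    intro q hq
    refine ⟨comb_mem hρ.1 hq hc0.le hc1, fun b hbA hbne => ?_⟩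
    have h1 : payP v b _ = (1 - c) * payP v b ρ + c * payP v b q := payP_comb v b _ _ ρ q
    have h2 : payP v a _ = (1 - c) * payP v a ρ + c * payP v a q := payP_comb v a _ _ ρ q
    have h5 := hεp c hc0 hcε b (by simp [hS, hbA, hbne]) (payP v b q - payP v a q)
      (hGbound b q hq)
    rw [h1, h2]; linarith
  -- the moment curve
  set i : Ω ≃ Fin (Fintype.card Ω) := Fintype.equivFin Ω with hi
  set e : A → Ω → ℝ := fun b ω => u a ω - u b ω with he
  set D : A → ℝ := fun b => payP u a ρ - payP u b ρ with hD
  have hsub : ∀ (b : A) (σ : Ω → ℝ), payP u a σ - payP u b σ = ∑ ω, σ ω * e b ω := by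
    intro b σ
    unfold payP
    rw [← Finset.sum_sub_distrib]
    refine Finset.sum_congr rfl fun ω _ => ?_
    rw [he]; ring
  set P : A → Polynomial ℝ := fun b =>
    ∑ ω, Polynomial.C ((1 - c) * D b + c * e b ω) * Polynomial.X ^ ((i ω : ℕ)) with hP
  have hPcoeff : ∀ (b : A) (ω₀ : Ω), (P b).coeff (i ω₀) = (1 - c) * D b + c * e b ω₀ := by
    intro b ω₀
    rw [hP]
    simp only [Polynomial.finset_sum_coeff, Polynomial.coeff_C_mul_X_pow]
    rw [Finset.sum_eq_single ω₀]
    · simp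
    · intro ω _ hne
      have : ((i ω₀ : ℕ) : ℕ) ≠ (i ω : ℕ) := by
        intro h
        exact hne (i.injective (Fin.ext h)).symm
      simp [this]
    · intro h; exact absurd (Finset.mem_univ ω₀) h
  have hPne : ∀ b : A, b ≠ a → P b ≠ 0 := by
    intro b hbne hP0
    have hκ : ∀ ω, (1 - c) * D b + c * e b ω = 0 := by
      intro ω
      rw [← hPcoeff b ω, hP0]
      simp
    have hee : ∀ ω ω', e b ω = e b ω' := by
      intro ω ω'
      have h1 := hκ ω; have h2 := hκ ω'
      have : c * e b ω = c * e b ω' := by linarith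
      exact mul_left_cancel₀ (ne_of_gt hc0) this
    obtain ⟨ω₀⟩ := (inferInstance : Nonempty Ω)
    have hDb : D b = e b ω₀ := by
      rw [hD]
      show payP u a ρ - payP u b ρ = e b ω₀
      rw [hsub b ρ]
      have : ∀ ω ∈ Finset.univ, ρ ω * e b ω = ρ ω * e b ω₀ := fun ω _ => by rw [hee ω ω₀]
      rw [Finset.sum_congr rfl this, ← Finset.sum_mul, hρ.1.2, one_mul]
    have h0 : e b ω₀ = 0 := by
      have := hκ ω₀
      rw [hDb] at this
      linarith
    obtain ⟨ω, hω⟩ := hnrE a b (Ne.symm hbne)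
    have hz : u a ω - u b ω = 0 := by
      have h := (hee ω ω₀).trans h0
      simpa [he] using h
    exact hω (by linarith)
  -- pick a non-root parameter
  have hBadFin : (⋃ b ∈ (Finset.univ.filter (fun b : A => b ≠ a) : Finset A),
      {x : ℝ | (P b).IsRoot x}).Finite := by
    refine Set.Finite.biUnion (Finset.finite_toSet _) fun b hb => ?_
    exact Polynomial.finite_setOf_isRoot (hPne b (by simpa using hb))
  obtain ⟨s, hs⟩ := ((Set.Ioi_infinite (0:ℝ)).diff hBadFin).nonempty
  have hspos : 0 < s := hs.1
  set N : ℝ := ∑ ω, s ^ ((i ω : ℕ)) with hN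
  have hNpos : 0 < N := Finset.sum_pos (fun ω _ => pow_pos hspos _) Finset.univ_nonempty
  set q : Ω → ℝ := fun ω => s ^ ((i ω : ℕ)) / N with hq
  have hqmem : q ∈ stdSimplex ℝ Ω := by
    constructor
    · intro ω; exact div_nonneg (pow_pos hspos _).le hNpos.le
    · rw [hq]
      show (∑ ω, s ^ ((i ω : ℕ)) / N) = 1
      rw [← Finset.sum_div, ← hN, div_self (ne_of_gt hNpos)]
  set π' : Ω → ℝ := fun ω => (1 - c) * ρ ω + c * q ω with hπ'
  refine ⟨π', hmix q hqmem, fun b hbne => ?_⟩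
  intro heq
  have hdiff : payP u a π' - payP u b π' = 0 := by rw [heq]; ring
  -- evaluate the polynomial
  have hL : (P b).eval s = ((1 - c) * N) * D b + c * ∑ ω, e b ω * s ^ ((i ω : ℕ)) := by
    rw [hP]
    show Polynomial.eval s (∑ ω, Polynomial.C ((1 - c) * D b + c * e b ω)
      * Polynomial.X ^ ((i ω : ℕ))) = _
    rw [Polynomial.eval_finset_sum]
    have hterm : ∀ ω ∈ Finset.univ, Polynomial.eval s (Polynomial.C ((1 - c) * D b + c * e b ω)
        * Polynomial.X ^ ((i ω : ℕ)))
        = (1 - c) * D b * s ^ ((i ω : ℕ)) + c * (e b ω * s ^ ((i ω : ℕ))) := by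
      intro ω _
      simp only [Polynomial.eval_mul, Polynomial.eval_C, Polynomial.eval_pow, Polynomial.eval_X]
      ring
    rw [Finset.sum_congr rfl hterm, Finset.sum_add_distrib, ← Finset.mul_sum, ← Finset.mul_sum,
      ← hN]
    ring
  have hR : N * (payP u a π' - payP u b π')
      = ((1 - c) * N) * D b + c * ∑ ω, e b ω * s ^ ((i ω : ℕ)) := by
    rw [hsub b π', Finset.mul_sum]
    have hterm : ∀ ω ∈ Finset.univ, N * (π' ω * e b ω)
        = ((1 - c) * N) * (ρ ω * e b ω) + c * (e b ω * s ^ ((i ω : ℕ))) := by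
      intro ω _
      show N * (((1 - c) * ρ ω + c * (s ^ ((i ω : ℕ)) / N)) * e b ω) = _
      field_simp
    rw [Finset.sum_congr rfl hterm, Finset.sum_add_distrib, ← Finset.mul_sum, ← Finset.mul_sum]
    congr 1
    rw [← hsub b ρ]
  have hPeval : (P b).eval s = 0 := by
    rw [hL, ← hR, hdiff, mul_zero]
  have hbmem : b ∈ Finset.univ.filter (fun b : A => b ≠ a) := by simp [hbne]
  exact hs.2 (Set.mem_iUnion.mpr ⟨b, Set.mem_iUnion.mpr ⟨hbmem, hPeval⟩⟩)

end Generic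
section Main

variable [Fintype Ω] [Nonempty Ω] [Fintype A] [Nonempty A]

/-- If `a ∈ Ahat` attains the expert value at `π`, then `a` is a best reply at `π`. -/
theorem mem_br_of_attains {u v : A → Ω → ℝ} (hnrDM : NoRedundantDM v)
    (hnrE : NoRedundantExperts u) (hconc : UbarConcave u v)
    {π : Ω → ℝ} (hπ : π ∈ stdSimplex ℝ Ω) {a : A} (haA : a ∈ Ahat v)
    (hmin : payP u a π = ubar u v π) : a ∈ br v π := by
  classical
  by_contra habr
  obtain ⟨ρ, hρ⟩ := exists_mem_Ua hnrDM haA ⟨π, hπ⟩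
  obtain ⟨π', hπ'Ua, hπ'gen⟩ := exists_good_point hnrE hρ
  have hπ'Δ : π' ∈ stdSimplex ℝ Ω := hπ'Ua.1
  obtain ⟨b₀, hb₀⟩ := br_nonempty v π
  set S' : Finset A := Finset.univ.filter (fun cc => cc ∉ br v π) with hS'
  have hfneg : ∀ cc ∈ S', payP v cc π - payP v b₀ π < 0 := by
    intro cc hcc
    have hcbr : cc ∉ br v π := by simpa [hS'] using hcc
    have hex : ∃ a', payP v cc π < payP v a' π := by
      by_contra h; push_neg at h; exact hcbr fun a' => h a'
    obtain ⟨a', ha'⟩ := hex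
    have := hb₀ a'
    linarith
  obtain ⟨ε, hε0, hε1, hεp⟩ := exists_eps_near_zero S'
    (fun cc => payP v cc π - payP v b₀ π) (fun cc => payP v cc π' - payP v b₀ π') hfneg
  have hBadFin : (⋃ b ∈ (Finset.univ.filter (fun b : A => b ≠ a) : Finset A),
      {t : ℝ | (1 - t) * (payP u a π - payP u b π)
        + t * (payP u a π' - payP u b π') = 0}).Finite := by
    refine Set.Finite.biUnion (Finset.finite_toSet _) fun b hb => ?_
    have hbne : b ≠ a := by simpa using hb
    have hBne : payP u a π' - payP u b π' ≠ 0 := sub_ne_zero.mpr (hπ'gen b hbne)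
    refine Set.Subsingleton.finite ?_
    intro t1 h1 t2 h2
    simp only [Set.mem_setOf_eq] at h1 h2
    by_contra hne
    set Aq := payP u a π - payP u b π with hAq
    set Bq := payP u a π' - payP u b π' with hBq
    have h3 : (t1 - t2) * (Bq - Aq) = 0 := by linear_combination h1 - h2
    rcases mul_eq_zero.mp h3 with h | h
    · exact hne (by linarith)
    · have hAB : Aq = Bq := by linarith
      rw [← hAB] at h1
      have hA0 : Aq = 0 := by linear_combination h1
      exact hBne (by rw [← hAB]; exact hA0)
  obtain ⟨t, ht⟩ := ((Set.Ioo_infinite hε0).diff hBadFin).nonempty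
  have ht0 : 0 < t := ht.1.1
  have htε : t < ε := ht.1.2
  have ht1 : t ≤ 1 := le_of_lt (lt_of_lt_of_le htε hε1)
  set σ : Ω → ℝ := fun ω => (1 - t) * π ω + t * π' ω with hσ
  have hσΔ : σ ∈ stdSimplex ℝ Ω := comb_mem hπ hπ'Δ ht0.le ht1
  have hbrsub : ∀ cc, cc ∈ br v σ → cc ∈ br v π := by
    intro cc hcc
    by_contra hcbr
    have hccS : cc ∈ S' := by simp [hS', hcbr]
    have h4 : (1 - t) * (payP v cc π - payP v b₀ π)
        + t * (payP v cc π' - payP v b₀ π') < 0 := hεp t ht0 htε cc hccS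
    have h1 : payP v cc σ = (1 - t) * payP v cc π + t * payP v cc π' := payP_comb v cc _ _ π π'
    have h2 : payP v b₀ σ = (1 - t) * payP v b₀ π + t * payP v b₀ π' := payP_comb v b₀ _ _ π π'
    have h3 := hcc b₀
    rw [h1, h2] at h3
    linarith
  have hub : ubar u v σ = payP u a σ := by
    have hle : ubar u v σ ≤ payP u a σ := ubar_le_payP hnrDM hconc hσΔ haA
    have hcv := hconc π hπ π' hπ'Δ (1 - t) ⟨by linarith, by linarith⟩
    have hrw : 1 - (1 - t) = t := by ring
    rw [hrw] at hcv
    have hfun : (fun ω => (1 - t) * π ω + t * π' ω) = σ := rfl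
    rw [hfun] at hcv
    have hubπ' : ubar u v π' = payP u a π' := ubar_eq_of_mem_Ua u hπ'Ua
    have hpσ : payP u a σ = (1 - t) * payP u a π + t * payP u a π' := payP_comb u a _ _ π π'
    rw [hubπ', ← hmin] at hcv
    have hge : payP u a σ ≤ ubar u v σ := by rw [hpσ]; linarith
    linarith
  obtain ⟨b, hbbr, hbeq⟩ := exists_br_ubar u v σ
  have hbπ : b ∈ br v π := hbrsub b hbbr
  have hbnea : b ≠ a := fun h => habr (h ▸ hbπ)
  have htie : (1 - t) * (payP u a π - payP u b π) + t * (payP u a π' - payP u b π') = 0 := by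
    have h1 : payP u a σ = (1 - t) * payP u a π + t * payP u a π' := payP_comb u a _ _ π π'
    have h2 : payP u b σ = (1 - t) * payP u b π + t * payP u b π' := payP_comb u b _ _ π π'
    have h3 : payP u b σ = payP u a σ := by rw [← hbeq, hub]
    rw [h1, h2] at h3
    linarith
  have hbmem : b ∈ Finset.univ.filter (fun b : A => b ≠ a) := by simp [hbnea]
  exact ht.2 (Set.mem_iUnion.mpr ⟨b, Set.mem_iUnion.mpr ⟨hbmem, htie⟩⟩)

end Main
/-- Lemma 2: maximal conflict of interest everywhere. `BR(π)` is exactly the set of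
minimizers of the experts' payoff over the mixed actions supported on `Â`. -/
theorem BR_eq_argmin_expert_payoff {Ω A : Type*} [Fintype Ω] [Nonempty Ω] [Fintype A] [Nonempty A]
    (u v : A → Ω → ℝ)
    (hnrDM : NoRedundantDM v) (hnrE : NoRedundantExperts u) (hconc : UbarConcave u v) :
    ∀ π ∈ stdSimplex ℝ Ω,
      BR v π = {α | α ∈ simplexOn (Ahat v) ∧ ∀ α' ∈ simplexOn (Ahat v), pay u α π ≤ pay u α' π} := by
  classical
  intro π hπ
  have hClaim : ∀ b ∈ Ahat v, ubar u v π ≤ payP u b π := fun b hb =>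
    ubar_le_payP hnrDM hconc hπ hb
  have hbrval : ∀ b ∈ br v π, payP u b π = ubar u v π := fun b hb =>
    le_antisymm (payP_le_ubar u hb) (hClaim b (br_subset_Ahat v hπ hb))
  obtain ⟨b₀, hb₀⟩ := br_nonempty v π
  have hb₀A : b₀ ∈ Ahat v := br_subset_Ahat v hπ hb₀
  have hsimplexOn_ge : ∀ α' ∈ simplexOn (Ahat v), ubar u v π ≤ pay u α' π := by
    intro α' hα'
    rw [pay_eq_sum]
    calc ubar u v π = ∑ cc, α' cc * ubar u v π := by rw [← Finset.sum_mul, hα'.1.2, one_mul]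
      _ ≤ ∑ cc, α' cc * payP u cc π := by
          refine Finset.sum_le_sum fun cc _ => ?_
          by_cases hz : α' cc = 0
          · simp [hz]
          · have hccA : cc ∈ Ahat v := by
              by_contra hno
              exact hz (hα'.2 cc hno)
            exact mul_le_mul_of_nonneg_left (hClaim cc hccA) (hα'.1.1 cc)
  ext α
  simp only [Set.mem_setOf_eq]
  constructor
  · intro hα
    obtain ⟨hαs, hsupp⟩ := mem_BR_iff.mp hα
    have hαval : pay u α π = ubar u v π := by
      rw [pay_eq_sum]
      have h0 : ∀ cc ∈ Finset.univ, α cc * payP u cc π = α cc * ubar u v π := by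
        intro cc _
        by_cases hz : α cc = 0
        · simp [hz]
        · rw [hbrval cc (hsupp cc hz)]
      rw [Finset.sum_congr rfl h0, ← Finset.sum_mul, hαs.2, one_mul]
    refine ⟨⟨hαs, fun cc hcc => ?_⟩, fun α' hα' => ?_⟩
    · by_contra hz
      exact hcc (br_subset_Ahat v hπ (hsupp cc hz))
    · rw [hαval]; exact hsimplexOn_ge α' hα'
  · rintro ⟨hαOn, hminα⟩
    have hpm : pmass b₀ ∈ simplexOn (Ahat v) := by
      refine ⟨pmass_mem b₀, fun cc hcc => ?_⟩
      have hne : cc ≠ b₀ := fun h => hcc (h ▸ hb₀A)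
      simp [pmass, hne]
    have hαle : pay u α π ≤ ubar u v π := by
      have h := hminα (pmass b₀) hpm
      rwa [pay_pmass, hbrval b₀ hb₀] at h
    have hsup : ∀ cc, α cc ≠ 0 → payP u cc π = ubar u v π := by
      intro cc hz
      have hccA : cc ∈ Ahat v := by
        by_contra hno; exact hz (hαOn.2 cc hno)
      refine le_antisymm ?_ (hClaim cc hccA)
      by_contra hgt
      push_neg at hgt
      have hstrict : ∑ c', α c' * ubar u v π < ∑ c', α c' * payP u c' π := by
        refine Finset.sum_lt_sum (fun c' _ => ?_) ⟨cc, Finset.mem_univ cc, ?_⟩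
        · by_cases hz' : α c' = 0
          · simp [hz']
          · have hA : c' ∈ Ahat v := by by_contra hno; exact hz' (hαOn.2 c' hno)
            exact mul_le_mul_of_nonneg_left (hClaim c' hA) (hαOn.1.1 c')
        · have hpos : 0 < α cc := lt_of_le_of_ne (hαOn.1.1 cc) (Ne.symm hz)
          exact mul_lt_mul_of_pos_left hgt hpos
      have h1 : ∑ c', α c' * ubar u v π = ubar u v π := by
        rw [← Finset.sum_mul, hαOn.1.2, one_mul]
      rw [h1, ← pay_eq_sum] at hstrict
      linarith
    refine mem_BR_iff.mpr ⟨hαOn.1, fun cc hz => ?_⟩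
    have hccA : cc ∈ Ahat v := by
      by_contra hno; exact hz (hαOn.2 cc hno)
    exact mem_br_of_attains hnrDM hnrE hconc hπ hccA (hsup cc hz)
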